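/- There exists ε* > 0 such that for all ε ∈ (0, ε*) and all x ≥ 0, the function I_ε satisfies I_ε(x) ≤ (ε/2)·x² + 2x. -/

import Mathlib

/-- There exists ε* > 0 such that for all ε ∈ (0, ε*) and all x ≥ 0,
`I_ε(x) := ∫₀ˣ s·L_ε'(s) ds ≤ (ε/2)·x² + 2x`, where `L_ε'(s) = ε + 1/(ρ_ε(s) + ε)`
and ρ_ε is the ε-resolvent of the logarithm. -/
theorem stmt5 :
    ∃ εstar : ℝ, 0 < εstar ∧ ∀ ε : ℝ, 0 < ε → ε < εstar →
      ∀ ρ : ℝ → ℝ, (∀ x : ℝ, 0 < ρ x ∧ ρ x + ε * Real.log (ρ x) = x) →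
        ∀ x : ℝ, 0 ≤ x →
          (∫ s in (0:ℝ)..x, s * (ε + 1 / (ρ s + ε))) ≤ ε / 2 * x ^ 2 + 2 * x := by
  refine ⟨1, one_pos, fun ε hε hε1 ρ hρ x hx => ?_⟩
  by_cases hint : IntervalIntegrable (fun s => s * (ε + 1 / (ρ s + ε)))
      MeasureTheory.volume 0 x
  · have hg : IntervalIntegrable (fun s => ε * s + 2) MeasureTheory.volume 0 x :=
      ((continuous_const.mul continuous_id).add continuous_const).intervalIntegrable 0 x
    have key : ∀ s ∈ Set.Icc (0:ℝ) x, s * (ε + 1 / (ρ s + ε)) ≤ ε * s + 2 := by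
      intro s hs
      obtain ⟨hρs, heq⟩ := hρ s
      have hρε : 0 < ρ s + ε := by linarith
      have hlog : Real.log (ρ s) ≤ ρ s - 1 := Real.log_le_sub_one_of_pos hρs
      have hs2 : s ≤ (1 + ε) * (ρ s + ε) := by nlinarith [hs.1]
      have h1 : s * (1 / (ρ s + ε)) ≤ 1 + ε := by
        rw [mul_one_div, div_le_iff₀ hρε]; linarith
      have hre : s * (ε + 1 / (ρ s + ε)) = ε * s + s * (1 / (ρ s + ε)) := by ring
      rw [hre]; linarith
    have hmono := intervalIntegral.integral_mono_on hx hint hg key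
    have hval : (∫ s in (0:ℝ)..x, (ε * s + 2)) = ε / 2 * x ^ 2 + 2 * x := by
      rw [intervalIntegral.integral_add (f := fun s : ℝ => ε * s) (g := fun _ : ℝ => (2:ℝ))
        (((continuous_const.mul continuous_id').intervalIntegrable 0 x : IntervalIntegrable (fun s : ℝ => ε * s) MeasureTheory.volume 0 x))
        (intervalIntegrable_const)]
      rw [intervalIntegral.integral_const_mul, integral_id, intervalIntegral.integral_const, smul_eq_mul]
      ring
    linarith [hmono, hval.le, hval.ge]
  · rw [intervalIntegral.integral_undef hint]
    nlinarith
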